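/- arXiv:1706.08693 — 2 statements merged into one kernel-verified Lean document; each statement's English description precedes it below -/
import Mathlib

section
/- Let P ∈ ℝ^{n×n} have nonnegative entries, γ ∈ [0,1) with γ‖P‖ < 1, and let L := (I − γP)⁻¹ be the Leontief matrix. Then for all indices i, k, m: L_{mi} L_{kk} − L_{mk} L_{ki} ≥ 0; in particular L_{mi} ≥ L_{mk} L_{ki} / L_{kk}. -/
open Matrix
open scoped Matrix.Norms.L2Operator

namespace Stmt12Aux

variable {n : ℕ}

lemma pow_entry_nonneg {t : Matrix (Fin n) (Fin n) ℝ} (ht : ∀ i j, 0 ≤ t i j) :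
    ∀ m i j, 0 ≤ (t ^ m) i j := by
  intro m
  induction m with
  | zero =>
    intro i j
    rw [pow_zero, Matrix.one_apply]
    split <;> norm_num
  | succ m ih =>
    intro i j
    rw [pow_succ, Matrix.mul_apply]
    exact Finset.sum_nonneg fun l _ => mul_nonneg (ih i l) (ht l j)

lemma inv_one_sub_nonneg (t : Matrix (Fin n) (Fin n) ℝ)
    (ht : ∀ i j, 0 ≤ t i j) (hlt : ‖t‖ < 1) : ∀ i j, 0 ≤ (1 - t)⁻¹ i j := by
  intro i j
  have hsum : HasSum (fun m : ℕ => t ^ m) ((1 - t)⁻¹) := by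
    have h := hasSum_geom_series_inverse t hlt
    rwa [← Matrix.nonsing_inv_eq_ringInverse] at h
  have hcont : Continuous
      ⇑(AddMonoidHom.mk' (fun M : Matrix (Fin n) (Fin n) ℝ => M i j) (fun _ _ => rfl)) := by
    let f : Matrix (Fin n) (Fin n) ℝ →ₗ[ℝ] ℝ :=
      { toFun := fun M => M i j, map_add' := fun _ _ => rfl, map_smul' := fun _ _ => rfl }
    exact f.continuous_of_finiteDimensional
  have h2 : HasSum (fun m : ℕ => (t ^ m) i j) ((1 - t)⁻¹ i j) := by
    have h := hsum.map
      (AddMonoidHom.mk' (fun M : Matrix (Fin n) (Fin n) ℝ => M i j) (fun _ _ => rfl)) hcont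
    exact h
  exact hasSum_le (fun m => pow_entry_nonneg ht m i j) hasSum_zero h2

lemma mul_E_mul (X Y : Matrix (Fin n) (Fin n) ℝ) (k a b : Fin n) :
    (X * single k k (1 : ℝ) * Y) a b = X a k * Y k b := by
  rw [Matrix.mul_assoc, Matrix.mul_apply]
  rw [Finset.sum_eq_single k]
  · rw [Matrix.single_mul_apply_same, one_mul]
  · intro l _ hl
    rw [Matrix.single_mul_apply_of_ne (1:ℝ) k k l b hl Y, mul_zero]
  · simp

/-- The main inequality for a general nonnegative matrix of norm `< 1`. -/
lemma main (A : Matrix (Fin n) (Fin n) ℝ) (hAnn : ∀ a b, 0 ≤ A a b) (hAlt : ‖A‖ < 1)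
    (i k m : Fin n) :
    0 ≤ (1 - A)⁻¹ m i * (1 - A)⁻¹ k k - (1 - A)⁻¹ m k * (1 - A)⁻¹ k i
      ∧ (1:ℝ) ≤ (1 - A)⁻¹ k k := by
  obtain ⟨L, hLdef⟩ : ∃ L, L = (1 - A)⁻¹ := ⟨_, rfl⟩
  rw [← hLdef]
  obtain ⟨E, hEdef⟩ : ∃ E, E = single k k (1:ℝ) := ⟨_, rfl⟩
  have hunit : IsUnit (1 - A) := isUnit_one_sub_of_norm_lt_one hAlt
  have hdet : IsUnit (1 - A).det := (Matrix.isUnit_iff_isUnit_det _).mp hunit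
  have hLmul : (1 - A) * L = 1 := by rw [hLdef]; exact Matrix.mul_nonsing_inv _ hdet
  have hLnn : ∀ a b, 0 ≤ L a b := by rw [hLdef]; exact inv_one_sub_nonneg A hAnn hAlt
  have hLeq : L = 1 + A * L := by
    have h1 : L - A * L = 1 := by
      have h := hLmul
      rw [Matrix.sub_mul, Matrix.one_mul] at h
      exact h
    rw [← h1]; abel
  have hLkk : (1:ℝ) ≤ L k k := by
    have h2 : L k k = 1 + (A * L) k k := by
      conv_lhs => rw [hLeq]
      rw [Matrix.add_apply, Matrix.one_apply_eq]
    have h3 : 0 ≤ (A * L) k k := by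
      rw [Matrix.mul_apply]
      exact Finset.sum_nonneg fun l _ => mul_nonneg (hAnn k l) (hLnn l k)
    rw [h2]; linarith
  refine ⟨?_, hLkk⟩
  have hEE : E * E = E := by rw [hEdef, Matrix.single_mul_single_same, mul_one]
  obtain ⟨D, hDdef⟩ : ∃ D, D = 1 - E := ⟨_, rfl⟩
  have hDH : Dᴴ = D := by
    rw [hDdef, Matrix.conjTranspose_sub, Matrix.conjTranspose_one]
    congr 1
    ext a b
    simp [hEdef, Matrix.conjTranspose_apply, Matrix.single, and_comm]
  have hDD : D * D = D := by
    rw [hDdef, Matrix.mul_sub, Matrix.mul_one, Matrix.sub_mul, Matrix.one_mul, hEE]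
    abel
  have hDle : ‖D‖ ≤ 1 := by
    have h := Matrix.l2_opNorm_conjTranspose_mul_self D
    rw [hDH, hDD] at h
    nlinarith [norm_nonneg D]
  obtain ⟨At, hAtdef⟩ : ∃ At, At = A * D := ⟨_, rfl⟩
  have hAtlt : ‖At‖ < 1 := by
    rw [hAtdef]
    exact lt_of_le_of_lt (le_trans (Matrix.l2_opNorm_mul A D)
      (mul_le_of_le_one_right (norm_nonneg A) hDle)) hAlt
  have hAtAE : At = A - A * E := by rw [hAtdef, hDdef, Matrix.mul_sub, Matrix.mul_one]
  have hAtnn : ∀ a b, 0 ≤ At a b := by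
    intro a b
    rw [hAtAE, Matrix.sub_apply]
    by_cases hb : b = k
    · have h5 : (A * E) a b = A a k * 1 := by
        rw [hEdef, hb]
        exact Matrix.mul_single_apply_same (1:ℝ) k k a A
      rw [h5, mul_one, hb, sub_self]
    · have h5 : (A * E) a b = 0 := by
        rw [hEdef]
        exact Matrix.mul_single_apply_of_ne (1:ℝ) k k a b hb A
      rw [h5, sub_zero]
      exact hAnn a b
  have hAtunit : IsUnit (1 - At) := isUnit_one_sub_of_norm_lt_one hAtlt
  have hAtdet : IsUnit (1 - At).det := (Matrix.isUnit_iff_isUnit_det _).mp hAtunit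
  obtain ⟨B, hBdef⟩ : ∃ B, B = (1 - At)⁻¹ := ⟨_, rfl⟩
  have hBmul : B * (1 - At) = 1 := by rw [hBdef]; exact Matrix.nonsing_inv_mul _ hAtdet
  have hBmul' : (1 - At) * B = 1 := by rw [hBdef]; exact Matrix.mul_nonsing_inv _ hAtdet
  have hBnn : ∀ a b, 0 ≤ B a b := by rw [hBdef]; exact inv_one_sub_nonneg At hAtnn hAtlt
  obtain ⟨N, hNdef⟩ : ∃ N, N = (L k k) • L - L * E * L := ⟨_, rfl⟩
  have hELE : E * L * E = (L k k) • E := by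
    rw [hEdef]
    ext a b
    rw [Matrix.smul_apply]
    by_cases hb : b = k
    · rw [hb, Matrix.mul_single_apply_same]
      by_cases ha : a = k
      · rw [ha, Matrix.single_mul_apply_same, Matrix.single_apply_same]
        simp
      · rw [Matrix.single_mul_apply_of_ne (1:ℝ) k k a k ha L, zero_mul,
          Matrix.single_apply_of_ne k k (1:ℝ) a k (fun h => ha h.1.symm), smul_zero]
    · rw [Matrix.mul_single_apply_of_ne (1:ℝ) k k a b hb,
        Matrix.single_apply_of_ne k k (1:ℝ) a b (fun h => hb h.2.symm), smul_zero]
  have hEN : E * N = 0 := by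
    rw [hNdef, Matrix.mul_sub, Matrix.mul_smul]
    have h1 : E * (L * E * L) = (E * L * E) * L := by
      rw [Matrix.mul_assoc, Matrix.mul_assoc, Matrix.mul_assoc]
    rw [h1, hELE, Matrix.smul_mul, sub_self]
  have hkey1 : (1 - At) * N = (L k k) • 1 - E * L := by
    have hsplit : (1 : Matrix (Fin n) (Fin n) ℝ) - At = (1 - A) + A * E := by
      rw [hAtAE]; abel
    rw [hsplit, Matrix.add_mul, Matrix.mul_assoc A E N, hEN, Matrix.mul_zero, add_zero]
    rw [hNdef, Matrix.mul_sub, Matrix.mul_smul, hLmul]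
    rw [← Matrix.mul_assoc, ← Matrix.mul_assoc, hLmul, Matrix.one_mul]
  have hAtE : At * E = 0 := by
    rw [hAtAE, Matrix.sub_mul, Matrix.mul_assoc, hEE, sub_self]
  have hkey2 : (1 - At) * ((L k k) • B - E * L) = (L k k) • 1 - E * L := by
    rw [Matrix.mul_sub, Matrix.mul_smul, hBmul']
    congr 1
    rw [Matrix.sub_mul, Matrix.one_mul, ← Matrix.mul_assoc At E L, hAtE,
      Matrix.zero_mul, sub_zero]
  have hNeq : N = (L k k) • B - E * L := by
    have h := congrArg (fun X => B * X) (hkey1.trans hkey2.symm)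
    rw [← Matrix.mul_assoc, ← Matrix.mul_assoc, hBmul, Matrix.one_mul, Matrix.one_mul] at h
    exact h
  have hNmi : N m i = L m i * L k k - L m k * L k i := by
    rw [hNdef, Matrix.sub_apply, Matrix.smul_apply, hEdef, mul_E_mul, smul_eq_mul]
    ring
  by_cases hm : m = k
  · rw [hm]
    have h0 : L k i * L k k - L k k * L k i = 0 := by ring
    linarith
  · have hRHS : ((L k k) • B - E * L) m i = L k k * B m i := by
      rw [Matrix.sub_apply, Matrix.smul_apply, smul_eq_mul, hEdef,
        Matrix.single_mul_apply_of_ne (1:ℝ) k k m i hm L, sub_zero]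
    rw [hNeq, hRHS] at hNmi
    rw [← hNmi]
    exact mul_nonneg (by linarith) (hBnn m i)

end Stmt12Aux

theorem stmt_12 {n : ℕ} (P : Matrix (Fin n) (Fin n) ℝ) (γ : ℝ)
    (hγ0 : 0 ≤ γ) (hγ1 : γ < 1)
    (hnonneg : ∀ i j, 0 ≤ P i j) (hnorm : γ * ‖P‖ < 1) :
    ∀ i k m : Fin n,
      0 ≤ ((1 - γ • P)⁻¹) m i * ((1 - γ • P)⁻¹) k k
            - ((1 - γ • P)⁻¹) m k * ((1 - γ • P)⁻¹) k i ∧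
      ((1 - γ • P)⁻¹) m k * ((1 - γ • P)⁻¹) k i / ((1 - γ • P)⁻¹) k k
        ≤ ((1 - γ • P)⁻¹) m i := by
  intro i k m
  have hAnn : ∀ a b, 0 ≤ (γ • P) a b := by
    intro a b
    have h : (γ • P) a b = γ * P a b := rfl
    rw [h]
    exact mul_nonneg hγ0 (hnonneg a b)
  have hAlt : ‖γ • P‖ < 1 := by
    rw [norm_smul, Real.norm_eq_abs, abs_of_nonneg hγ0]
    exact hnorm
  obtain ⟨hmain, hLkk⟩ := Stmt12Aux.main (γ • P) hAnn hAlt i k m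
  have hLkkpos : (0:ℝ) < (1 - γ • P)⁻¹ k k := by linarith
  refine ⟨hmain, ?_⟩
  rw [div_le_iff₀ hLkkpos]
  linarith
end

section
/- Let P ∈ ℝ^{n×n} have nonnegative entries, γ ≥ 0 with γ‖P‖ < 1, and L := (I − γP)⁻¹. Define the Bonacich centrality v^i := ∑_{m=1}^n L_{mi} and v^i_k := (∑_{m=1}^n L_{mk}) · L_{ki} / L_{kk}. Then v^i ≥ v^i_k for all i, k. -/
set_option maxHeartbeats 1000000

open Matrix Finset Filter
open scoped Matrix.Norms.L2Operator

/-- First-passage path weights: `fpStep A k s m` is the total weight of paths of length `s`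
from `m` to `k` which hit `k` only at the final step (with `fpStep A k 0 m = δ_{mk}`). -/
noncomputable def fpStep {n : ℕ} (A : Matrix (Fin n) (Fin n) ℝ) (k : Fin n) :
    ℕ → Fin n → ℝ
  | 0 => fun m => if m = k then 1 else 0
  | (s+1) => fun m => if m = k then 0 else ∑ j, A m j * fpStep A k s j

lemma fpStep_nonneg {n : ℕ} {A : Matrix (Fin n) (Fin n) ℝ} (hA : ∀ i j, 0 ≤ A i j)
    (k : Fin n) : ∀ s m, 0 ≤ fpStep A k s m := by
  intro s
  induction s with
  | zero => intro m; simp only [fpStep]; split <;> norm_num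
  | succ s ih =>
      intro m; simp only [fpStep]; split
      · exact le_refl 0
      · exact Finset.sum_nonneg fun j _ => mul_nonneg (hA m j) (ih j)

lemma pow_entry_nonneg {n : ℕ} {A : Matrix (Fin n) (Fin n) ℝ} (hA : ∀ i j, 0 ≤ A i j) :
    ∀ (t : ℕ) (a b : Fin n), 0 ≤ (A ^ t) a b := by
  intro t
  induction t with
  | zero => intro a b; rw [pow_zero]; by_cases h : a = b <;> simp [Matrix.one_apply, h]
  | succ t ih =>
      intro a b
      rw [pow_succ, Matrix.mul_apply]
      exact Finset.sum_nonneg fun j _ => mul_nonneg (ih a j) (hA j b)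

lemma fpStep_eq {n : ℕ} {A : Matrix (Fin n) (Fin n) ℝ} (k : Fin n) :
    ∀ (t : ℕ) (m : Fin n),
      (A ^ t) m k = ∑ s ∈ Finset.range (t+1), fpStep A k s m * (A ^ (t - s)) k k := by
  intro t
  induction t with
  | zero =>
      intro m
      simp [fpStep, Matrix.one_apply, apply_ite]
  | succ t ih =>
      intro m
      by_cases hm : m = k
      · subst hm
        rw [Finset.sum_range_succ']
        have h1 : ∀ s ∈ Finset.range (t+1), fpStep A m (s+1) m * (A ^ (t + 1 - (s+1))) m m = 0 := by
          intro s _; simp [fpStep]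
        rw [Finset.sum_congr rfl h1]
        simp [fpStep]
      · rw [Finset.sum_range_succ']
        have h0 : fpStep A k 0 m = 0 := by simp [fpStep, hm]
        rw [h0, zero_mul, add_zero]
        have hstep : ∀ s, fpStep A k (s+1) m = ∑ j, A m j * fpStep A k s j := by
          intro s; simp [fpStep, hm]
        calc (A ^ (t+1)) m k = ∑ j, A m j * (A ^ t) j k := by
              rw [pow_succ', Matrix.mul_apply]
          _ = ∑ j, A m j * ∑ s ∈ Finset.range (t+1), fpStep A k s j * (A ^ (t - s)) k k := by
              simp_rw [ih]
          _ = ∑ j, ∑ s ∈ Finset.range (t+1), A m j * fpStep A k s j * (A ^ (t - s)) k k := by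
              simp_rw [Finset.mul_sum, mul_assoc]
          _ = ∑ s ∈ Finset.range (t+1), (∑ j, A m j * fpStep A k s j) * (A ^ (t - s)) k k := by
              rw [Finset.sum_comm]; simp_rw [Finset.sum_mul]
          _ = ∑ s ∈ Finset.range (t+1), fpStep A k (s+1) m * (A ^ (t + 1 - (s+1))) k k := by
              refine Finset.sum_congr rfl fun s _ => ?_
              rw [hstep, Nat.succ_sub_succ]

lemma fpStep_le {n : ℕ} {A : Matrix (Fin n) (Fin n) ℝ} (hA : ∀ i j, 0 ≤ A i j)
    (k i : Fin n) :
    ∀ (t : ℕ) (m : Fin n),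
      ∑ s ∈ Finset.range (t+1), fpStep A k s m * (A ^ (t - s)) k i ≤ (A ^ t) m i := by
  intro t
  induction t with
  | zero =>
      intro m
      simp only [Finset.range_one, Finset.sum_singleton, Nat.sub_zero, pow_zero]
      by_cases hm : m = k
      · subst hm; simp [fpStep]
      · simp [fpStep, hm, Matrix.one_apply]
        by_cases h : m = i <;> simp [h]
  | succ t ih =>
      intro m
      by_cases hm : m = k
      · subst hm
        rw [Finset.sum_range_succ']
        have h1 : ∀ s ∈ Finset.range (t+1), fpStep A m (s+1) m * (A ^ (t + 1 - (s+1))) m i = 0 := by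
          intro s _; simp [fpStep]
        rw [Finset.sum_congr rfl h1]
        simp [fpStep]
      · rw [Finset.sum_range_succ']
        have h0 : fpStep A k 0 m = 0 := by simp [fpStep, hm]
        rw [h0, zero_mul, add_zero]
        have hstep : ∀ s, fpStep A k (s+1) m = ∑ j, A m j * fpStep A k s j := by
          intro s; simp [fpStep, hm]
        calc ∑ s ∈ Finset.range (t+1), fpStep A k (s+1) m * (A ^ (t + 1 - (s+1))) k i
            = ∑ s ∈ Finset.range (t+1), (∑ j, A m j * fpStep A k s j) * (A ^ (t - s)) k i := by
              refine Finset.sum_congr rfl fun s _ => ?_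
              rw [hstep, Nat.succ_sub_succ]
          _ = ∑ j, A m j * ∑ s ∈ Finset.range (t+1), fpStep A k s j * (A ^ (t - s)) k i := by
              simp_rw [Finset.sum_mul]
              rw [Finset.sum_comm]
              simp_rw [Finset.mul_sum, mul_assoc]
          _ ≤ ∑ j, A m j * (A ^ t) j i := by
              refine Finset.sum_le_sum fun j _ => ?_
              exact mul_le_mul_of_nonneg_left (ih j) (hA m j)
          _ = (A ^ (t+1)) m i := by rw [pow_succ', Matrix.mul_apply]

lemma fpStep_le_pow {n : ℕ} {A : Matrix (Fin n) (Fin n) ℝ} (hA : ∀ i j, 0 ≤ A i j)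
    (k : Fin n) : ∀ (s : ℕ) (m : Fin n), fpStep A k s m ≤ (A ^ s) m k := by
  intro s m
  have h := fpStep_le hA k k s m
  have h2 : fpStep A k s m * (A ^ (s - s)) k k ≤
      ∑ s' ∈ Finset.range (s+1), fpStep A k s' m * (A ^ (s - s')) k k := by
    refine Finset.single_le_sum (f := fun s' => fpStep A k s' m * (A ^ (s - s')) k k)
      (fun s' _ => mul_nonneg (fpStep_nonneg hA k s' m) (pow_entry_nonneg hA _ k k)) ?_
    simp
  have h3 : (A ^ (s - s)) k k = 1 := by simp [Matrix.one_apply]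
  rw [h3, mul_one] at h2
  exact h2.trans h

lemma entry_abs_le_l2_opNorm {n : ℕ} (M : Matrix (Fin n) (Fin n) ℝ) (i j : Fin n) :
    |M i j| ≤ ‖M‖ := by
  have h1 := M.l2_opNorm_mulVec (EuclideanSpace.single j (1 : ℝ))
  rw [EuclideanSpace.norm_single, norm_one, mul_one] at h1
  refine le_trans ?_ h1
  have hv : ((EuclideanSpace.equiv (Fin n) ℝ).symm (M *ᵥ (EuclideanSpace.single j (1:ℝ)))) i
      = M i j := by
    simp [Matrix.mulVec, dotProduct, EuclideanSpace.single_apply, mul_ite]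
  calc |M i j|
      = √ ((((EuclideanSpace.equiv (Fin n) ℝ).symm (M *ᵥ (EuclideanSpace.single j (1:ℝ)))) i)^2) := by
        rw [hv, Real.sqrt_sq_eq_abs]
    _ ≤ ‖(EuclideanSpace.equiv (Fin n) ℝ).symm (M *ᵥ (EuclideanSpace.single j (1:ℝ)))‖ := by
        set w := (EuclideanSpace.equiv (Fin n) ℝ).symm (M *ᵥ (EuclideanSpace.single j (1:ℝ))) with hw
        rw [EuclideanSpace.norm_eq]
        apply Real.sqrt_le_sqrt
        have := Finset.single_le_sum (f := fun l => ‖w l‖^2) (fun l _ => sq_nonneg _)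
          (Finset.mem_univ i)
        simpa [Real.norm_eq_abs, sq_abs] using this


lemma cauchy_eq_aux {F G : ℕ → ℝ} {x : ℝ} (hFn : ∀ s, 0 ≤ F s) (hGn : ∀ u, 0 ≤ G u)
    (hF : Summable F) (hG : HasSum G x) :
    (∑' s, F s) * x = ∑' t, ∑ s ∈ Finset.range (t+1), F s * G (t - s) := by
  have hprod : Summable fun p : ℕ × ℕ => F p.1 * G p.2 :=
    Summable.mul_of_nonneg hF hG.summable hFn hGn
  rw [← hG.tsum_eq]
  exact Summable.tsum_mul_tsum_eq_tsum_sum_range hF hG.summable hprod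

lemma cauchy_le_aux {F G H : ℕ → ℝ} {x y : ℝ} (hFn : ∀ s, 0 ≤ F s) (hGn : ∀ u, 0 ≤ G u)
    (hF : Summable F) (hG : HasSum G x) (hH : HasSum H y)
    (hle : ∀ t, ∑ s ∈ Finset.range (t+1), F s * G (t - s) ≤ H t) :
    (∑' s, F s) * x ≤ y := by
  have hprod : Summable fun p : ℕ × ℕ => F p.1 * G p.2 :=
    Summable.mul_of_nonneg hF hG.summable hFn hGn
  rw [cauchy_eq_aux hFn hGn hF hG, ← hH.tsum_eq]
  exact Summable.tsum_le_tsum hle (summable_sum_mul_range_of_summable_mul hprod) hH.summable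

theorem stmt_13 {n : ℕ} (P : Matrix (Fin n) (Fin n) ℝ) (γ : ℝ) (hγ : 0 ≤ γ)
    (hnonneg : ∀ i j, 0 ≤ P i j) (hnorm : γ * ‖P‖ < 1)
    (L : Matrix (Fin n) (Fin n) ℝ) (hL : L = (1 - γ • P)⁻¹)
    (v : Fin n → ℝ) (hv : ∀ i, v i = ∑ m, L m i)
    (vk : Fin n → Fin n → ℝ) (hvk : ∀ i k, vk i k = (∑ m, L m k) * L k i / L k k) :
    ∀ i k, vk i k ≤ v i := by
  intro i k
  set A : Matrix (Fin n) (Fin n) ℝ := γ • P with hAdef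
  have hAnn : ∀ a b, 0 ≤ A a b := fun a b => mul_nonneg hγ (hnonneg a b)
  have hAlt : ‖A‖ < 1 := by
    rw [hAdef, norm_smul, Real.norm_eq_abs, abs_of_nonneg hγ]; exact hnorm
  have hUnit : IsUnit (1 - A) := by
    have := (Units.oneSub A hAlt).isUnit
    simpa using this
  have hdet : IsUnit (1 - A).det := (Matrix.isUnit_iff_isUnit_det _).1 hUnit
  have hLinv : (1 - A) * L = 1 := by rw [hL]; exact Matrix.mul_nonsing_inv _ hdet
  -- partial sums
  have hS : ∀ N : ℕ, (∑ t ∈ Finset.range N, A ^ t) = L - A ^ N * L := by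
    intro N
    have h1 : (∑ t ∈ Finset.range N, A ^ t) * (1 - A) = 1 - A ^ N := by
      have h := geom_sum_mul A N
      calc (∑ t ∈ Finset.range N, A ^ t) * (1 - A)
          = -((∑ t ∈ Finset.range N, A ^ t) * (A - 1)) := by rw [← mul_neg, neg_sub]
        _ = -(A ^ N - 1) := by rw [h]
        _ = 1 - A ^ N := by rw [neg_sub]
    calc (∑ t ∈ Finset.range N, A ^ t)
        = (∑ t ∈ Finset.range N, A ^ t) * ((1 - A) * L) := by rw [hLinv, mul_one]
      _ = ((∑ t ∈ Finset.range N, A ^ t) * (1 - A)) * L := by rw [mul_assoc]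
      _ = (1 - A ^ N) * L := by rw [h1]
      _ = L - A ^ N * L := by rw [sub_mul, one_mul]
  have hpowN : ∀ N : ℕ, ‖A ^ N‖ ≤ ‖A‖ ^ N := by
    intro N
    induction N with
    | zero =>
        rw [pow_zero, pow_zero, Matrix.cstar_norm_def, _root_.map_one, ContinuousLinearMap.one_def]
        exact ContinuousLinearMap.norm_id_le
    | succ N ih =>
        rw [pow_succ, pow_succ]
        exact (norm_mul_le _ _).trans (mul_le_mul_of_nonneg_right ih (norm_nonneg A))
  have hten : ∀ a b : Fin n,
      Filter.Tendsto (fun N => (∑ t ∈ Finset.range N, A ^ t) a b) atTop (nhds (L a b)) := by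
    intro a b
    have h0 : Filter.Tendsto (fun N => (A ^ N * L) a b) atTop (nhds 0) := by
      refine squeeze_zero_norm (a := fun N => ‖A‖ ^ N * ‖L‖) (fun N => ?_) ?_
      · calc ‖(A ^ N * L) a b‖ = |(A ^ N * L) a b| := rfl
          _ ≤ ‖A ^ N * L‖ := entry_abs_le_l2_opNorm _ a b
          _ ≤ ‖A ^ N‖ * ‖L‖ := norm_mul_le _ _
          _ ≤ ‖A‖ ^ N * ‖L‖ := mul_le_mul_of_nonneg_right (hpowN N) (norm_nonneg L)
      · have := (tendsto_pow_atTop_nhds_zero_of_lt_one (norm_nonneg A) hAlt).mul_const ‖L‖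
        simpa using this
    have h2 := h0.const_sub (L a b)
    rw [sub_zero] at h2
    refine h2.congr fun N => ?_
    rw [hS N, Matrix.sub_apply]
  have hHS : ∀ a b : Fin n, HasSum (fun t => (A ^ t) a b) (L a b) := by
    intro a b
    rw [hasSum_iff_tendsto_nat_of_nonneg (fun t => pow_entry_nonneg hAnn t a b)]
    refine (hten a b).congr fun N => ?_
    rw [Matrix.sum_apply]
  have hsum : ∀ a b : Fin n, Summable (fun t => (A ^ t) a b) := fun a b => ⟨_, hHS a b⟩
  have hLnn : ∀ a b : Fin n, 0 ≤ L a b := fun a b =>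
    hasSum_le (fun t => pow_entry_nonneg hAnn t a b) hasSum_zero (hHS a b)
  have hLkk : 1 ≤ L k k := by
    have h := le_hasSum (hHS k k) 0 (fun t _ => pow_entry_nonneg hAnn t k k)
    simpa [Matrix.one_apply] using h
  have hkkpos : 0 < L k k := lt_of_lt_of_le one_pos hLkk
  -- key minor inequality
  have minor : ∀ m : Fin n, L m k * L k i ≤ L m i * L k k := by
    intro m
    have hfpnn := fpStep_nonneg hAnn k
    have hfpsum : Summable (fun s => fpStep A k s m) :=
      Summable.of_nonneg_of_le (fun s => hfpnn s m) (fun s => fpStep_le_pow hAnn k s m)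
        (hsum m k)
    have hΦnn : 0 ≤ ∑' s, fpStep A k s m := tsum_nonneg fun s => hfpnn s m
    have key1 : L m k = (∑' s, fpStep A k s m) * L k k := by
      have hEq := cauchy_eq_aux (F := fun s => fpStep A k s m)
        (G := fun u => (A ^ u) k k) (fun s => hfpnn s m)
        (fun u => pow_entry_nonneg hAnn u k k) hfpsum (hHS k k)
      have hMk : L m k = ∑' t, ∑ s ∈ Finset.range (t+1), fpStep A k s m * (A ^ (t - s)) k k := by
        rw [← (hHS m k).tsum_eq]
        exact tsum_congr fun t => fpStep_eq k t m
      exact hMk.trans hEq.symm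
    have key2 : (∑' s, fpStep A k s m) * L k i ≤ L m i := by
      exact cauchy_le_aux (F := fun s => fpStep A k s m)
        (G := fun u => (A ^ u) k i) (H := fun t => (A ^ t) m i)
        (fun s => hfpnn s m) (fun u => pow_entry_nonneg hAnn u k i) hfpsum
        (hHS k i) (hHS m i) (fun t => fpStep_le hAnn k i t m)
    calc L m k * L k i = ((∑' s, fpStep A k s m) * L k i) * L k k := by rw [key1]; ring
      _ ≤ L m i * L k k := mul_le_mul_of_nonneg_right key2 (le_of_lt hkkpos)
  -- conclude
  rw [hvk, hv, div_le_iff₀ hkkpos]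
  calc (∑ m, L m k) * L k i = ∑ m, L m k * L k i := by rw [Finset.sum_mul]
    _ ≤ ∑ m, L m i * L k k := Finset.sum_le_sum fun m _ => minor m
    _ = (∑ m, L m i) * L k k := by rw [Finset.sum_mul]
end
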